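/- Let n ∈ (0,3), k > 0, and ε ∈ (0,1). Then there exists a function ψ : [ε, 1/ε] → ℝ that is twice continuously differentiable on [ε, 1/ε], satisfies ψ''(H) + (2/3)·(H² + H^{n−1})^{−1}·ψ(H)^{−1/2} = 0 for ε ≤ H ≤ 1/ε, ψ(ε) = k², ψ'(1/ε) = 0, and moreover satisfies ψ(H) ≥ k² and ψ'(H) ≥ 0 for all H ∈ [ε, 1/ε]. -/

import Mathlib

open Filter Topology Set

open MeasureTheory
open scoped ENNReal

noncomputable section TWaux

namespace TWaux

variable (n k ε : ℝ)

/-- coefficient -/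
def cc (s : ℝ) : ℝ := 2 / 3 * (s ^ 2 + s ^ (n - 1))⁻¹

/-- real nonlinearity -/
def gr (y : ℝ) : ℝ := y ^ (-(1 / 2) : ℝ)

/-- ENNReal (clipped) nonlinearity -/
def gE (x : ℝ≥0∞) : ℝ≥0∞ := (x ⊔ ENNReal.ofReal (k ^ 2)) ^ (-(1 / 2) : ℝ)

/-- the integral operator -/
def TE (φ : ℝ → ℝ≥0∞) (H : ℝ) : ℝ≥0∞ :=
  ENNReal.ofReal (k ^ 2) +
    ∫⁻ t in Set.Ioc ε H, ∫⁻ s in Set.Ioc t (1 / ε), ENNReal.ofReal (cc n s) * gE k (φ s)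

lemma gE_anti : Antitone (gE k) := by
  intro x y hxy
  unfold gE
  rw [ENNReal.rpow_neg, ENNReal.rpow_neg]
  exact ENNReal.inv_le_inv.mpr (ENNReal.rpow_le_rpow (sup_le_sup_right hxy _) (by norm_num))

lemma TE_anti {φ₁ φ₂ : ℝ → ℝ≥0∞} (h : φ₁ ≤ φ₂) : TE n k ε φ₂ ≤ TE n k ε φ₁ := by
  intro H
  unfold TE
  gcongr with t s
  exact gE_anti k (h s)


lemma cc_nonneg {s : ℝ} (hs : 0 < s) : 0 ≤ cc n s := by
  unfold cc
  positivity

lemma denom_pos {s : ℝ} (hs : 0 < s) : 0 < s ^ 2 + s ^ (n - 1) := by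
  have h1 : (0:ℝ) < s ^ 2 := by positivity
  have h2 : (0:ℝ) ≤ s ^ (n - 1) := Real.rpow_nonneg hs.le _
  linarith

lemma cc_le (hε : 0 < ε) {s : ℝ} (hs : ε ≤ s) : cc n s ≤ 2 / 3 * (ε ^ 2)⁻¹ := by
  have hsp : 0 < s := lt_of_lt_of_le hε hs
  unfold cc
  have h2 : (0:ℝ) ≤ s ^ (n - 1) := Real.rpow_nonneg hsp.le _
  have h3 : ε ^ 2 ≤ s ^ 2 + s ^ (n - 1) := by nlinarith
  have h4 : (0:ℝ) < ε ^ 2 := by positivity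
  have := inv_anti₀ h4 h3
  linarith

lemma gE_le (hk : 0 < k) (x : ℝ≥0∞) : gE k x ≤ ENNReal.ofReal ((k ^ 2) ^ (-(1 / 2) : ℝ)) := by
  have hk2 : (0:ℝ) < k ^ 2 := by positivity
  rw [← ENNReal.ofReal_rpow_of_pos hk2]
  unfold gE
  rw [ENNReal.rpow_neg, ENNReal.rpow_neg]
  exact ENNReal.inv_le_inv.mpr (ENNReal.rpow_le_rpow (le_sup_right) (by norm_num))

/-- squared operator, monotone -/
def S : (ℝ → ℝ≥0∞) →o (ℝ → ℝ≥0∞) :=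
  ⟨fun φ => TE n k ε (TE n k ε φ), fun φ₁ φ₂ h => TE_anti n k ε (TE_anti n k ε h)⟩

def uE : ℝ → ℝ≥0∞ := OrderHom.lfp (S n k ε)

def vE : ℝ → ℝ≥0∞ := TE n k ε (uE n k ε)

lemma TE_uE : TE n k ε (uE n k ε) = vE n k ε := rfl

lemma TE_vE : TE n k ε (vE n k ε) = uE n k ε := OrderHom.map_lfp (S n k ε)

lemma uE_le_vE : uE n k ε ≤ vE n k ε := by
  refine OrderHom.lfp_le (S n k ε) ?_
  show TE n k ε (TE n k ε (vE n k ε)) ≤ vE n k ε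
  rw [TE_vE]
  exact le_rfl

lemma TE_mono (φ : ℝ → ℝ≥0∞) : Monotone (TE n k ε φ) := by
  intro H₁ H₂ h
  unfold TE
  exact add_le_add_right
    (lintegral_mono' (Measure.restrict_mono (Set.Ioc_subset_Ioc_right h) le_rfl) le_rfl) _

lemma measurable_uE : Measurable (uE n k ε) := by
  rw [← TE_vE]; exact (TE_mono n k ε _).measurable

lemma measurable_vE : Measurable (vE n k ε) := (TE_mono n k ε _).measurable

lemma le_TE (φ : ℝ → ℝ≥0∞) (H : ℝ) : ENNReal.ofReal (k ^ 2) ≤ TE n k ε φ H := le_self_add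

/-- global upper bound constant -/
def Bc : ℝ := k ^ 2 + 2 / 3 * (ε ^ 2)⁻¹ * (k ^ 2) ^ (-(1 / 2) : ℝ) * (1 / ε - ε) * (1 / ε - ε)

lemma TE_le (hε : 0 < ε) (hε1 : ε < 1) (hk : 0 < k) (φ : ℝ → ℝ≥0∞) {H : ℝ} (hH : H ≤ 1 / ε) :
    TE n k ε φ H ≤ ENNReal.ofReal (Bc k ε) := by
  have hLε : (0:ℝ) ≤ 1 / ε - ε := by
    have : ε ≤ 1 / ε := le_trans hε1.le (le_of_lt ((lt_div_iff₀ hε).mpr (by nlinarith)))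
    linarith
  set cMg : ℝ := 2 / 3 * (ε ^ 2)⁻¹ * (k ^ 2) ^ (-(1 / 2) : ℝ) with hcMg
  have hcMg0 : 0 ≤ cMg := by
    have : (0:ℝ) ≤ (k ^ 2) ^ (-(1 / 2) : ℝ) := Real.rpow_nonneg (by positivity) _
    positivity
  have hinner : ∀ t ∈ Set.Ioc ε H,
      (∫⁻ s in Set.Ioc t (1 / ε), ENNReal.ofReal (cc n s) * gE k (φ s))
        ≤ ENNReal.ofReal cMg * ENNReal.ofReal (1 / ε - ε) := by
    intro t ht
    calc ∫⁻ s in Set.Ioc t (1 / ε), ENNReal.ofReal (cc n s) * gE k (φ s)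
        ≤ ∫⁻ _ in Set.Ioc t (1 / ε), ENNReal.ofReal cMg := by
          refine setLIntegral_mono measurable_const ?_
          intro x hx
          have hx0 : ε ≤ x := le_trans ht.1.le hx.1.le
          rw [hcMg, ENNReal.ofReal_mul (by positivity)]
          exact mul_le_mul' (ENNReal.ofReal_le_ofReal (cc_le n ε hε hx0)) (gE_le k hk _)
      _ = ENNReal.ofReal cMg * ENNReal.ofReal (1 / ε - t) := by
          rw [setLIntegral_const, Real.volume_Ioc]
      _ ≤ ENNReal.ofReal cMg * ENNReal.ofReal (1 / ε - ε) := by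
          exact mul_le_mul_right (ENNReal.ofReal_le_ofReal (by linarith [ht.1])) _
  unfold TE
  calc ENNReal.ofReal (k ^ 2) +
      ∫⁻ t in Set.Ioc ε H, ∫⁻ s in Set.Ioc t (1 / ε), ENNReal.ofReal (cc n s) * gE k (φ s)
      ≤ ENNReal.ofReal (k ^ 2) +
        ∫⁻ _ in Set.Ioc ε H, ENNReal.ofReal cMg * ENNReal.ofReal (1 / ε - ε) := by
        exact add_le_add_right (setLIntegral_mono measurable_const hinner) _
    _ = ENNReal.ofReal (k ^ 2) +
        ENNReal.ofReal cMg * ENNReal.ofReal (1 / ε - ε) * ENNReal.ofReal (H - ε) := by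
        rw [setLIntegral_const, Real.volume_Ioc]
    _ ≤ ENNReal.ofReal (k ^ 2) +
        ENNReal.ofReal cMg * ENNReal.ofReal (1 / ε - ε) * ENNReal.ofReal (1 / ε - ε) := by
        refine add_le_add_right (mul_le_mul_right (ENNReal.ofReal_le_ofReal (by linarith)) _) _
    _ = ENNReal.ofReal (Bc k ε) := by
        have hBc : Bc k ε = k ^ 2 + cMg * (1 / ε - ε) * (1 / ε - ε) := by
          rw [hcMg]; unfold Bc; ring
        rw [hBc]
        conv_rhs => rw [ENNReal.ofReal_add (by positivity) (by positivity),
          ENNReal.ofReal_mul (by positivity), ENNReal.ofReal_mul hcMg0]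

lemma hq_meas (φ : ℝ → ℝ≥0∞) (hφm : Measurable φ) :
    Measurable (fun s => ENNReal.ofReal (cc n s) * gE k (φ s)) := by
  apply Measurable.mul
  · apply Measurable.ennreal_ofReal
    unfold cc
    apply Measurable.const_mul
    apply Measurable.inv
    exact (measurable_id.pow_const 2).add (measurable_id.pow measurable_const)
  · unfold gE
    exact ((hφm.sup measurable_const).pow measurable_const)

lemma gE_lt_top (hk : 0 < k) (x : ℝ≥0∞) : gE k x < ∞ :=
  lt_of_le_of_lt (gE_le k hk x) ENNReal.ofReal_lt_top

lemma W_le (hε : 0 < ε) (hk : 0 < k) (φ : ℝ → ℝ≥0∞) {t : ℝ} (ht : ε ≤ t) :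
    (∫⁻ s in Set.Ioc t (1 / ε), ENNReal.ofReal (cc n s) * gE k (φ s))
      ≤ ENNReal.ofReal (2 / 3 * (ε ^ 2)⁻¹ * (k ^ 2) ^ (-(1 / 2) : ℝ)) *
          ENNReal.ofReal (1 / ε - t) := by
  calc ∫⁻ s in Set.Ioc t (1 / ε), ENNReal.ofReal (cc n s) * gE k (φ s)
      ≤ ∫⁻ _ in Set.Ioc t (1 / ε),
          ENNReal.ofReal (2 / 3 * (ε ^ 2)⁻¹ * (k ^ 2) ^ (-(1 / 2) : ℝ)) := by
        refine setLIntegral_mono measurable_const ?_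
        intro x hx
        have hx0 : ε ≤ x := le_trans ht hx.1.le
        rw [ENNReal.ofReal_mul (by positivity)]
        exact mul_le_mul' (ENNReal.ofReal_le_ofReal (cc_le n ε hε hx0)) (gE_le k hk _)
    _ = _ := by rw [setLIntegral_const, Real.volume_Ioc]

lemma W_lt_top (hε : 0 < ε) (hk : 0 < k) (φ : ℝ → ℝ≥0∞) {t : ℝ} (ht : ε ≤ t) :
    (∫⁻ s in Set.Ioc t (1 / ε), ENNReal.ofReal (cc n s) * gE k (φ s)) < ∞ :=
  lt_of_le_of_lt (W_le n k ε hε hk φ ht)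
    (ENNReal.mul_lt_top ENNReal.ofReal_lt_top ENNReal.ofReal_lt_top)

/-- inner transfer -/
lemma inner_toReal (hε : 0 < ε) (hk : 0 < k) (φ : ℝ → ℝ≥0∞) (hφm : Measurable φ)
    (hφlb : ∀ s, ENNReal.ofReal (k ^ 2) ≤ φ s) {t : ℝ} (ht : t ∈ Set.Icc ε (1 / ε)) :
    (∫⁻ s in Set.Ioc t (1 / ε), ENNReal.ofReal (cc n s) * gE k (φ s)).toReal
      = ∫ s in t..(1 / ε), cc n s * gr ((φ s).toReal) := by
  rw [intervalIntegral.integral_of_le ht.2]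
  rw [← integral_toReal ((hq_meas n k φ hφm).aemeasurable) (Filter.Eventually.of_forall
    (fun s => ENNReal.mul_lt_top ENNReal.ofReal_lt_top (gE_lt_top k hk _)))]
  refine setIntegral_congr_fun measurableSet_Ioc ?_
  intro s hs
  have hsε : (0:ℝ) < s := lt_of_lt_of_le hε (le_trans ht.1 hs.1.le)
  dsimp only
  rw [ENNReal.toReal_mul, ENNReal.toReal_ofReal (cc_nonneg n hsε)]
  congr 1
  unfold gE gr
  rw [sup_eq_left.mpr (hφlb s), ← ENNReal.toReal_rpow]

/-- transfer of the operator to real integrals -/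
lemma TE_toReal (hε : 0 < ε) (hε1 : ε < 1) (hk : 0 < k) (φ : ℝ → ℝ≥0∞) (hφm : Measurable φ)
    (hφlb : ∀ s, ENNReal.ofReal (k ^ 2) ≤ φ s) {H : ℝ} (hH : H ∈ Set.Icc ε (1 / ε)) :
    (TE n k ε φ H).toReal =
      k ^ 2 + ∫ t in ε..H, (∫ s in t..(1 / ε), cc n s * gr ((φ s).toReal)) := by
  have hWanti : Antitone (fun t => ∫⁻ s in Set.Ioc t (1 / ε),
      ENNReal.ofReal (cc n s) * gE k (φ s)) := fun t₁ t₂ h =>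
    lintegral_mono' (Measure.restrict_mono (Set.Ioc_subset_Ioc_left h) le_rfl) le_rfl
  have houtfin : (∫⁻ t in Set.Ioc ε H, ∫⁻ s in Set.Ioc t (1 / ε),
      ENNReal.ofReal (cc n s) * gE k (φ s)) ≠ ∞ := by
    have h1 : (∫⁻ t in Set.Ioc ε H, ∫⁻ s in Set.Ioc t (1 / ε),
        ENNReal.ofReal (cc n s) * gE k (φ s)) ≤ TE n k ε φ H := le_add_self
    exact (lt_of_le_of_lt (h1.trans (TE_le n k ε hε hε1 hk φ hH.2))
      ENNReal.ofReal_lt_top).ne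
  unfold TE
  rw [ENNReal.toReal_add ENNReal.ofReal_ne_top houtfin,
    ENNReal.toReal_ofReal (by positivity)]
  congr 1
  rw [intervalIntegral.integral_of_le hH.1]
  rw [← integral_toReal (hWanti.measurable.aemeasurable) ?_]
  · refine setIntegral_congr_fun measurableSet_Ioc ?_
    intro t htm
    exact inner_toReal n k ε hε hk φ hφm hφlb ⟨htm.1.le, le_trans htm.2 hH.2⟩
  · exact (ae_restrict_iff' measurableSet_Ioc).mpr (Filter.Eventually.of_forall
      (fun t htm => W_lt_top n k ε hε hk φ htm.1.le))


def ur : ℝ → ℝ := fun H => (uE n k ε H).toReal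

def vr : ℝ → ℝ := fun H => (vE n k ε H).toReal

lemma uE_lb (H : ℝ) : ENNReal.ofReal (k ^ 2) ≤ uE n k ε H := by
  rw [← TE_vE]; exact le_TE n k ε _ H

lemma vE_lb (H : ℝ) : ENNReal.ofReal (k ^ 2) ≤ vE n k ε H := le_TE n k ε _ H

lemma uE_ub (hε : 0 < ε) (hε1 : ε < 1) (hk : 0 < k) {H : ℝ} (hH : H ≤ 1 / ε) :
    uE n k ε H ≤ ENNReal.ofReal (Bc k ε) := by
  rw [← TE_vE]; exact TE_le n k ε hε hε1 hk _ hH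

lemma vE_ub (hε : 0 < ε) (hε1 : ε < 1) (hk : 0 < k) {H : ℝ} (hH : H ≤ 1 / ε) :
    vE n k ε H ≤ ENNReal.ofReal (Bc k ε) := TE_le n k ε hε hε1 hk _ hH

lemma uE_ne_top (hε : 0 < ε) (hε1 : ε < 1) (hk : 0 < k) {H : ℝ} (hH : H ≤ 1 / ε) :
    uE n k ε H ≠ ∞ :=
  ((uE_ub n k ε hε hε1 hk hH).trans_lt ENNReal.ofReal_lt_top).ne

lemma vE_ne_top (hε : 0 < ε) (hε1 : ε < 1) (hk : 0 < k) {H : ℝ} (hH : H ≤ 1 / ε) :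
    vE n k ε H ≠ ∞ :=
  ((vE_ub n k ε hε hε1 hk hH).trans_lt ENNReal.ofReal_lt_top).ne

lemma Bc_lb (hε : 0 < ε) (hε1 : ε < 1) (hk : 0 < k) : k ^ 2 ≤ Bc k ε := by
  have hLε : (0:ℝ) ≤ 1 / ε - ε := by
    have h1 : (1:ℝ) < 1 / ε := (lt_div_iff₀ hε).mpr (by nlinarith)
    linarith
  have hg : (0:ℝ) ≤ (k ^ 2) ^ (-(1 / 2) : ℝ) := Real.rpow_nonneg (by positivity) _
  unfold Bc
  nlinarith [mul_nonneg (mul_nonneg (mul_nonneg (by positivity : (0:ℝ) ≤ 2 / 3 * (ε ^ 2)⁻¹) hg) hLε) hLε]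

lemma ur_lb (hε : 0 < ε) (hε1 : ε < 1) (hk : 0 < k) {H : ℝ} (hH : H ≤ 1 / ε) :
    k ^ 2 ≤ ur n k ε H := by
  have := ENNReal.toReal_mono (uE_ne_top n k ε hε hε1 hk hH) (uE_lb n k ε H)
  rwa [ENNReal.toReal_ofReal (by positivity)] at this

lemma vr_lb (hε : 0 < ε) (hε1 : ε < 1) (hk : 0 < k) {H : ℝ} (hH : H ≤ 1 / ε) :
    k ^ 2 ≤ vr n k ε H := by
  have := ENNReal.toReal_mono (vE_ne_top n k ε hε hε1 hk hH) (vE_lb n k ε H)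
  rwa [ENNReal.toReal_ofReal (by positivity)] at this

lemma ur_ub (hε : 0 < ε) (hε1 : ε < 1) (hk : 0 < k) {H : ℝ} (hH : H ≤ 1 / ε) :
    ur n k ε H ≤ Bc k ε := by
  have := ENNReal.toReal_mono ENNReal.ofReal_ne_top (uE_ub n k ε hε hε1 hk hH)
  rwa [ENNReal.toReal_ofReal (le_trans (by positivity) (Bc_lb k ε hε hε1 hk))] at this

lemma vr_ub (hε : 0 < ε) (hε1 : ε < 1) (hk : 0 < k) {H : ℝ} (hH : H ≤ 1 / ε) :
    vr n k ε H ≤ Bc k ε := by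
  have := ENNReal.toReal_mono ENNReal.ofReal_ne_top (vE_ub n k ε hε hε1 hk hH)
  rwa [ENNReal.toReal_ofReal (le_trans (by positivity) (Bc_lb k ε hε hε1 hk))] at this

lemma ur_le_vr (hε : 0 < ε) (hε1 : ε < 1) (hk : 0 < k) {H : ℝ} (hH : H ≤ 1 / ε) :
    ur n k ε H ≤ vr n k ε H :=
  ENNReal.toReal_mono (vE_ne_top n k ε hε hε1 hk hH) (uE_le_vE n k ε H)

lemma ur_eq (hε : 0 < ε) (hε1 : ε < 1) (hk : 0 < k) {H : ℝ} (hH : H ∈ Set.Icc ε (1 / ε)) :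
    ur n k ε H = k ^ 2 + ∫ t in ε..H, (∫ s in t..(1 / ε), cc n s * gr (vr n k ε s)) := by
  unfold ur vr
  rw [← TE_vE]
  exact TE_toReal n k ε hε hε1 hk _ (measurable_vE n k ε) (vE_lb n k ε) hH

lemma vr_eq (hε : 0 < ε) (hε1 : ε < 1) (hk : 0 < k) {H : ℝ} (hH : H ∈ Set.Icc ε (1 / ε)) :
    vr n k ε H = k ^ 2 + ∫ t in ε..H, (∫ s in t..(1 / ε), cc n s * gr (ur n k ε s)) := by
  unfold ur vr vE
  exact TE_toReal n k ε hε hε1 hk _ (measurable_uE n k ε) (uE_lb n k ε) hH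

lemma measurable_ur : Measurable (ur n k ε) := (measurable_uE n k ε).ennreal_toReal

lemma measurable_vr : Measurable (vr n k ε) := (measurable_vE n k ε).ennreal_toReal


section qlemmas

variable {f : ℝ → ℝ}

lemma gr_nonneg {y : ℝ} (hy : 0 ≤ y) : 0 ≤ gr y := Real.rpow_nonneg hy _

lemma gr_le (hk : 0 < k) {y : ℝ} (hy : k ^ 2 ≤ y) : gr y ≤ (k ^ 2) ^ (-(1 / 2) : ℝ) :=
  Real.rpow_le_rpow_of_nonpos (by positivity) hy (by norm_num)

lemma q_nonneg (hε : 0 < ε) (hk : 0 < k) (hlb : ∀ x ∈ Set.Icc ε (1 / ε), k ^ 2 ≤ f x)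
    {x : ℝ} (hx : x ∈ Set.Icc ε (1 / ε)) : 0 ≤ cc n x * gr (f x) :=
  mul_nonneg (cc_nonneg n (lt_of_lt_of_le hε hx.1))
    (gr_nonneg (le_trans (by positivity) (hlb x hx)))

lemma q_meas (hf : Measurable f) : Measurable (fun s => cc n s * gr (f s)) := by
  apply Measurable.mul
  · unfold cc
    exact (((measurable_id.pow_const 2).add (measurable_id.pow measurable_const)).inv).const_mul _
  · unfold gr
    exact hf.pow measurable_const

lemma q_intOn (hε : 0 < ε) (hk : 0 < k) (hf : Measurable f)
    (hlb : ∀ x ∈ Set.Icc ε (1 / ε), k ^ 2 ≤ f x) :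
    IntegrableOn (fun s => cc n s * gr (f s)) (Set.Icc ε (1 / ε)) := by
  refine Integrable.mono' (integrable_const (2 / 3 * (ε ^ 2)⁻¹ * (k ^ 2) ^ (-(1 / 2) : ℝ)))
    ((q_meas n hf).aestronglyMeasurable.restrict) ?_
  refine (ae_restrict_iff' measurableSet_Icc).mpr (Filter.Eventually.of_forall ?_)
  intro x hx
  rw [Real.norm_eq_abs, abs_of_nonneg (q_nonneg n k ε hε hk hlb hx)]
  exact mul_le_mul (cc_le n ε hε hx.1) (gr_le k hk (hlb x hx))
    (gr_nonneg (le_trans (by positivity) (hlb x hx))) (by positivity)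

lemma q_intervalInt (hε : 0 < ε) (hε1 : ε < 1) (hk : 0 < k) (hf : Measurable f)
    (hlb : ∀ x ∈ Set.Icc ε (1 / ε), k ^ 2 ≤ f x) {a b : ℝ} (hab : a ≤ b)
    (ha : ε ≤ a) (hb : b ≤ 1 / ε) :
    IntervalIntegrable (fun s => cc n s * gr (f s)) volume a b :=
  (intervalIntegrable_iff_integrableOn_Ioc_of_le hab).mpr
    ((q_intOn n k ε hε hk hf hlb).mono_set
      (fun x hx => ⟨le_trans ha hx.1.le, le_trans hx.2 hb⟩))

/-- inner primitive -/
def Wf (f : ℝ → ℝ) (t : ℝ) : ℝ := ∫ s in t..(1 / ε), cc n s * gr (f s)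

lemma hεL (hε : 0 < ε) (hε1 : ε < 1) : ε ≤ 1 / ε := by
  have h1 : (1:ℝ) < 1 / ε := (lt_div_iff₀ hε).mpr (by nlinarith)
  linarith

lemma Wf_eqOn (hε : 0 < ε) (hε1 : ε < 1) (hk : 0 < k) (hf : Measurable f)
    (hlb : ∀ x ∈ Set.Icc ε (1 / ε), k ^ 2 ≤ f x) {t : ℝ} (ht : t ∈ Set.Icc ε (1 / ε)) :
    Wf n ε f t = (∫ s in ε..(1 / ε), cc n s * gr (f s)) - ∫ s in ε..t, cc n s * gr (f s) := by
  have h := intervalIntegral.integral_add_adjacent_intervals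
    (q_intervalInt n k ε hε hε1 hk hf hlb ht.1 le_rfl ht.2)
    (q_intervalInt n k ε hε hε1 hk hf hlb ht.2 ht.1 le_rfl)
  unfold Wf
  linarith

lemma Wf_contOn (hε : 0 < ε) (hε1 : ε < 1) (hk : 0 < k) (hf : Measurable f)
    (hlb : ∀ x ∈ Set.Icc ε (1 / ε), k ^ 2 ≤ f x) :
    ContinuousOn (Wf n ε f) (Set.Icc ε (1 / ε)) := by
  have huIcc : Set.uIcc ε (1 / ε) = Set.Icc ε (1 / ε) := Set.uIcc_of_le (hεL ε hε hε1)
  have hP : ContinuousOn (fun t => ∫ s in ε..t, cc n s * gr (f s)) (Set.Icc ε (1 / ε)) := by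
    rw [← huIcc]
    exact intervalIntegral.continuousOn_primitive_interval
      (huIcc ▸ q_intOn n k ε hε hk hf hlb)
  exact (continuousOn_const.sub hP).congr
    (fun t ht => Wf_eqOn n k ε hε hε1 hk hf hlb ht)

lemma Wf_nonneg (hε : 0 < ε) (hk : 0 < k)
    (hlb : ∀ x ∈ Set.Icc ε (1 / ε), k ^ 2 ≤ f x) {t : ℝ} (ht : t ∈ Set.Icc ε (1 / ε)) :
    0 ≤ Wf n ε f t := by
  refine intervalIntegral.integral_nonneg ht.2 ?_
  intro x hx
  exact q_nonneg n k ε hε hk hlb ⟨le_trans ht.1 hx.1, hx.2⟩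

lemma Wf_intervalInt (hε : 0 < ε) (hε1 : ε < 1) (hk : 0 < k) (hf : Measurable f)
    (hlb : ∀ x ∈ Set.Icc ε (1 / ε), k ^ 2 ≤ f x) {H : ℝ} (hH : H ∈ Set.Icc ε (1 / ε)) :
    IntervalIntegrable (Wf n ε f) volume ε H := by
  refine ContinuousOn.intervalIntegrable ?_
  refine (Wf_contOn n k ε hε hε1 hk hf hlb).mono ?_
  rw [Set.uIcc_of_le hH.1]
  exact fun x hx => ⟨hx.1, le_trans hx.2 hH.2⟩

end qlemmas

lemma ur_contOn (hε : 0 < ε) (hε1 : ε < 1) (hk : 0 < k) :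
    ContinuousOn (ur n k ε) (Set.Icc ε (1 / ε)) := by
  have huIcc : Set.uIcc ε (1 / ε) = Set.Icc ε (1 / ε) := Set.uIcc_of_le (hεL ε hε hε1)
  have hW := Wf_contOn n k ε (f := vr n k ε) hε hε1 hk (measurable_vr n k ε)
    (fun x hx => vr_lb n k ε hε hε1 hk hx.2)
  have hP : ContinuousOn (fun H => k ^ 2 + ∫ t in ε..H, Wf n ε (vr n k ε) t)
      (Set.Icc ε (1 / ε)) := by
    refine continuousOn_const.add ?_
    rw [← huIcc]
    exact intervalIntegral.continuousOn_primitive_interval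
      (huIcc ▸ hW.integrableOn_Icc)
  exact hP.congr (fun H hH => ur_eq n k ε hε hε1 hk hH)

lemma vr_contOn (hε : 0 < ε) (hε1 : ε < 1) (hk : 0 < k) :
    ContinuousOn (vr n k ε) (Set.Icc ε (1 / ε)) := by
  have huIcc : Set.uIcc ε (1 / ε) = Set.Icc ε (1 / ε) := Set.uIcc_of_le (hεL ε hε hε1)
  have hW := Wf_contOn n k ε (f := ur n k ε) hε hε1 hk (measurable_ur n k ε)
    (fun x hx => ur_lb n k ε hε hε1 hk hx.2)
  have hP : ContinuousOn (fun H => k ^ 2 + ∫ t in ε..H, Wf n ε (ur n k ε) t)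
      (Set.Icc ε (1 / ε)) := by
    refine continuousOn_const.add ?_
    rw [← huIcc]
    exact intervalIntegral.continuousOn_primitive_interval
      (huIcc ▸ hW.integrableOn_Icc)
  exact hP.congr (fun H hH => vr_eq n k ε hε hε1 hk hH)


lemma vr_le_ur (hε : 0 < ε) (hε1 : ε < 1) (hk : 0 < k) {H : ℝ}
    (hH : H ∈ Set.Icc ε (1 / ε)) : vr n k ε H ≤ ur n k ε H := by
  have hmu := measurable_ur n k ε
  have hmv := measurable_vr n k ε
  have hulb : ∀ x ∈ Set.Icc ε (1 / ε), k ^ 2 ≤ ur n k ε x :=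
    fun x hx => ur_lb n k ε hε hε1 hk hx.2
  have hvlb : ∀ x ∈ Set.Icc ε (1 / ε), k ^ 2 ≤ vr n k ε x :=
    fun x hx => vr_lb n k ε hε hε1 hk hx.2
  have hk2 : (0:ℝ) < k ^ 2 := by positivity
  have hB : 0 < Bc k ε := lt_of_lt_of_le hk2 (Bc_lb k ε hε hε1 hk)
  set A : Set ℝ := {t : ℝ | t ∈ Set.Ioc (0:ℝ) 1 ∧
    ∀ H ∈ Set.Icc ε (1 / ε), t * vr n k ε H ≤ ur n k ε H} with hA
  have hmem : k ^ 2 / Bc k ε ∈ A := by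
    constructor
    · exact ⟨by positivity, (div_le_one hB).mpr (Bc_lb k ε hε hε1 hk)⟩
    · intro H hH
      calc k ^ 2 / Bc k ε * vr n k ε H ≤ k ^ 2 / Bc k ε * Bc k ε :=
            mul_le_mul_of_nonneg_left (vr_ub n k ε hε hε1 hk hH.2) (by positivity)
        _ = k ^ 2 := div_mul_cancel₀ _ hB.ne'
        _ ≤ ur n k ε H := hulb H hH
  have hne : A.Nonempty := ⟨_, hmem⟩
  have hbdd : BddAbove A := ⟨1, fun t ht => ht.1.2⟩
  set τ := sSup A with hτ
  have hτ_lb : k ^ 2 / Bc k ε ≤ τ := le_csSup hbdd hmem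
  have hτ_pos : 0 < τ := lt_of_lt_of_le (by positivity) hτ_lb
  have hτ_le1 : τ ≤ 1 := csSup_le hne (fun t ht => ht.1.2)
  have hτv : ∀ H ∈ Set.Icc ε (1 / ε), τ * vr n k ε H ≤ ur n k ε H := by
    intro H hH
    have hvpos : 0 < vr n k ε H := lt_of_lt_of_le hk2 (hvlb H hH)
    have h1 : τ ≤ ur n k ε H / vr n k ε H :=
      csSup_le hne (fun t ht => (le_div_iff₀ hvpos).mpr (ht.2 H hH))
    exact (le_div_iff₀ hvpos).mp h1
  -- pointwise inequality for the nonlinearity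
  have hgr : ∀ s ∈ Set.Icc ε (1 / ε),
      gr (ur n k ε s) ≤ τ ^ (-(1 / 2) : ℝ) * gr (vr n k ε s) := by
    intro s hs
    have hvpos : 0 < vr n k ε s := lt_of_lt_of_le hk2 (hvlb s hs)
    have h1 : 0 < τ * vr n k ε s := by positivity
    calc gr (ur n k ε s) ≤ gr (τ * vr n k ε s) :=
          Real.rpow_le_rpow_of_nonpos h1 (hτv s hs) (by norm_num)
      _ = τ ^ (-(1 / 2) : ℝ) * gr (vr n k ε s) := by
          unfold gr; rw [Real.mul_rpow hτ_pos.le hvpos.le]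
  -- inner integral inequality
  have hq : ∀ t ∈ Set.Icc ε (1 / ε),
      Wf n ε (ur n k ε) t ≤ τ ^ (-(1 / 2) : ℝ) * Wf n ε (vr n k ε) t := by
    intro t ht
    unfold Wf
    rw [← intervalIntegral.integral_const_mul]
    refine intervalIntegral.integral_mono_on ht.2
      (q_intervalInt n k ε hε hε1 hk hmu hulb ht.2 ht.1 le_rfl)
      ((q_intervalInt n k ε hε hε1 hk hmv hvlb ht.2 ht.1 le_rfl).const_mul _) ?_
    intro x hx
    have hxI : x ∈ Set.Icc ε (1 / ε) := ⟨le_trans ht.1 hx.1, hx.2⟩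
    calc cc n x * gr (ur n k ε x)
        ≤ cc n x * (τ ^ (-(1 / 2) : ℝ) * gr (vr n k ε x)) :=
          mul_le_mul_of_nonneg_left (hgr x hxI) (cc_nonneg n (lt_of_lt_of_le hε hxI.1))
      _ = τ ^ (-(1 / 2) : ℝ) * (cc n x * gr (vr n k ε x)) := by ring
  -- outer integral inequality
  have houter : ∀ H ∈ Set.Icc ε (1 / ε),
      vr n k ε H - k ^ 2 ≤ τ ^ (-(1 / 2) : ℝ) * (ur n k ε H - k ^ 2) := by
    intro H hHm
    rw [vr_eq n k ε hε hε1 hk hHm, ur_eq n k ε hε hε1 hk hHm]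
    simp only [add_sub_cancel_left]
    rw [← intervalIntegral.integral_const_mul]
    refine intervalIntegral.integral_mono_on hHm.1
      (Wf_intervalInt n k ε hε hε1 hk hmu hulb hHm)
      ((Wf_intervalInt n k ε hε hε1 hk hmv hvlb hHm).const_mul _) ?_
    intro t htm
    exact hq t ⟨htm.1, le_trans htm.2 hHm.2⟩
  -- bootstrap
  set x := Real.sqrt τ with hx
  have hx_pos : 0 < x := Real.sqrt_pos.mpr hτ_pos
  have hx_le1 : x ≤ 1 := by
    rw [hx, show (1:ℝ) = Real.sqrt 1 from (Real.sqrt_one).symm]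
    exact Real.sqrt_le_sqrt hτ_le1
  have hx_sq : x ^ 2 = τ := Real.sq_sqrt hτ_pos.le
  have hτ_rpow : τ ^ (-(1 / 2) : ℝ) = x⁻¹ := by
    rw [show (-(1/2) : ℝ) = -(1/2) from rfl, Real.rpow_neg hτ_pos.le, hx,
      Real.sqrt_eq_rpow]
  have hkey : ∀ H ∈ Set.Icc ε (1 / ε),
      k ^ 2 + x * (vr n k ε H - k ^ 2) ≤ ur n k ε H := by
    intro H hHm
    have h1 := houter H hHm
    rw [hτ_rpow] at h1
    have h2 : x * (vr n k ε H - k ^ 2) ≤ ur n k ε H - k ^ 2 := by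
      have h3 : x * (vr n k ε H - k ^ 2) ≤ x * (x⁻¹ * (ur n k ε H - k ^ 2)) :=
        mul_le_mul_of_nonneg_left h1 hx_pos.le
      rwa [← mul_assoc, mul_inv_cancel₀ hx_pos.ne', one_mul] at h3
    linarith
  set q : ℝ := k ^ 2 / Bc k ε with hqdef
  have hq_pos : 0 < q := by positivity
  have hq_le1 : q ≤ 1 := (div_le_one hB).mpr (Bc_lb k ε hε hε1 hk)
  have hτ' : x + (1 - x) * q ∈ A := by
    constructor
    · constructor
      · have : 0 ≤ (1 - x) * q := mul_nonneg (by linarith) hq_pos.le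
        linarith
      · nlinarith
    · intro H hHm
      have hvB : vr n k ε H ≤ Bc k ε := vr_ub n k ε hε hε1 hk hHm.2
      have hv0 : 0 ≤ vr n k ε H := le_trans hk2.le (hvlb H hHm)
      have h5 : (1 - x) * q * vr n k ε H ≤ (1 - x) * k ^ 2 := by
        have : q * vr n k ε H ≤ k ^ 2 := by
          rw [hqdef]
          calc k ^ 2 / Bc k ε * vr n k ε H ≤ k ^ 2 / Bc k ε * Bc k ε :=
                mul_le_mul_of_nonneg_left hvB (by positivity)
            _ = k ^ 2 := div_mul_cancel₀ _ hB.ne'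
        nlinarith [this, hx_le1]
      have h6 := hkey H hHm
      nlinarith
  have hτ'_le : x + (1 - x) * q ≤ τ := le_csSup hbdd hτ'
  have hx_ge1 : 1 ≤ x := by nlinarith [hτ'_le, hx_sq, hq_pos, hx_le1]
  have hτ_ge1 : 1 ≤ τ := by nlinarith
  have := hτv H hH
  nlinarith [this, le_trans hk2.le (hvlb H hH)]

lemma ur_eq_vr (hε : 0 < ε) (hε1 : ε < 1) (hk : 0 < k) {H : ℝ}
    (hH : H ∈ Set.Icc ε (1 / ε)) : ur n k ε H = vr n k ε H :=
  le_antisymm (ur_le_vr n k ε hε hε1 hk hH.2) (vr_le_ur n k ε hε hε1 hk hH)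


/-- clamp onto the interval -/
def ee : ℝ → ℝ := fun s => min (max s ε) (1 / ε)

def qq : ℝ → ℝ := fun s => cc n (ee ε s) * gr (vr n k ε (ee ε s))

def Phi : ℝ → ℝ := fun t => ∫ s in t..(1 / ε), qq n k ε s

def psi : ℝ → ℝ := fun H => k ^ 2 + ∫ t in ε..H, Phi n k ε t

lemma ee_mem (hε : 0 < ε) (hε1 : ε < 1) (s : ℝ) : ee ε s ∈ Set.Icc ε (1 / ε) :=
  ⟨le_min (le_max_right _ _) (hεL ε hε hε1), min_le_right _ _⟩

lemma ee_id {s : ℝ} (hs : s ∈ Set.Icc ε (1 / ε)) : ee ε s = s := by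
  unfold ee
  rw [max_eq_left hs.1, min_eq_left hs.2]

lemma ee_cont : Continuous (ee ε) := (continuous_id.max continuous_const).min continuous_const

lemma qv_contOn (hε : 0 < ε) (hε1 : ε < 1) (hk : 0 < k) :
    ContinuousOn (fun s => cc n s * gr (vr n k ε s)) (Set.Icc ε (1 / ε)) := by
  have hk2 : (0:ℝ) < k ^ 2 := by positivity
  have hbase : ContinuousOn (fun s : ℝ => s ^ (n - 1)) (Set.Icc ε (1 / ε)) :=
    continuousOn_of_forall_continuousAt (fun x hx =>
      Real.continuousAt_rpow_const x _ (Or.inl (ne_of_gt (lt_of_lt_of_le hε hx.1))))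
  have hden : ContinuousOn (fun s : ℝ => s ^ 2 + s ^ (n - 1)) (Set.Icc ε (1 / ε)) :=
    (continuous_pow 2).continuousOn.add hbase
  have hcc : ContinuousOn (cc n) (Set.Icc ε (1 / ε)) := by
    unfold cc
    exact continuousOn_const.mul
      (hden.inv₀ (fun x hx => (denom_pos n (lt_of_lt_of_le hε hx.1)).ne'))
  have hgr : ContinuousOn gr (Set.Ici (k ^ 2)) :=
    continuousOn_of_forall_continuousAt (fun y hy =>
      Real.continuousAt_rpow_const y _ (Or.inl (ne_of_gt (lt_of_lt_of_le hk2 hy))))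
  have hmap : Set.MapsTo (vr n k ε) (Set.Icc ε (1 / ε)) (Set.Ici (k ^ 2)) :=
    fun x hx => vr_lb n k ε hε hε1 hk hx.2
  exact hcc.mul (hgr.comp (vr_contOn n k ε hε hε1 hk) hmap)

lemma qq_cont (hε : 0 < ε) (hε1 : ε < 1) (hk : 0 < k) : Continuous (qq n k ε) :=
  (qv_contOn n k ε hε hε1 hk).comp_continuous (ee_cont ε) (ee_mem ε hε hε1)

lemma qq_eqOn : Set.EqOn (qq n k ε) (fun s => cc n s * gr (vr n k ε s))
    (Set.Icc ε (1 / ε)) := by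
  intro s hs
  unfold qq
  rw [ee_id ε hs]

lemma qq_nonneg (hε : 0 < ε) (hε1 : ε < 1) (hk : 0 < k) (s : ℝ) : 0 ≤ qq n k ε s :=
  q_nonneg n k ε hε hk (fun x hx => vr_lb n k ε hε hε1 hk hx.2) (ee_mem ε hε hε1 s)

lemma Phi_eqOn (hε : 0 < ε) (hε1 : ε < 1) (hk : 0 < k) {t : ℝ}
    (ht : t ∈ Set.Icc ε (1 / ε)) : Phi n k ε t = Wf n ε (vr n k ε) t := by
  unfold Phi Wf
  refine intervalIntegral.integral_congr ?_
  rw [Set.uIcc_of_le ht.2]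
  exact fun x hx => qq_eqOn n k ε ⟨le_trans ht.1 hx.1, hx.2⟩

lemma Phi_hasDeriv (hε : 0 < ε) (hε1 : ε < 1) (hk : 0 < k) (t : ℝ) :
    HasDerivAt (Phi n k ε) (-(qq n k ε t)) t :=
  intervalIntegral.integral_hasDerivAt_left
    ((qq_cont n k ε hε hε1 hk).intervalIntegrable _ _)
    ((qq_cont n k ε hε hε1 hk).stronglyMeasurable.stronglyMeasurableAtFilter)
    (qq_cont n k ε hε hε1 hk).continuousAt

lemma Phi_cont (hε : 0 < ε) (hε1 : ε < 1) (hk : 0 < k) : Continuous (Phi n k ε) :=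
  continuous_iff_continuousAt.mpr (fun t => (Phi_hasDeriv n k ε hε hε1 hk t).continuousAt)

lemma Phi_nonneg (hε : 0 < ε) (hε1 : ε < 1) (hk : 0 < k) {t : ℝ}
    (ht : t ∈ Set.Icc ε (1 / ε)) : 0 ≤ Phi n k ε t := by
  rw [Phi_eqOn n k ε hε hε1 hk ht]
  exact Wf_nonneg n k ε hε hk (fun x hx => vr_lb n k ε hε hε1 hk hx.2) ht

lemma psi_hasDeriv (hε : 0 < ε) (hε1 : ε < 1) (hk : 0 < k) (H : ℝ) :
    HasDerivAt (psi n k ε) (Phi n k ε H) H := by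
  refine HasDerivAt.const_add _ ?_
  exact intervalIntegral.integral_hasDerivAt_right
    ((Phi_cont n k ε hε hε1 hk).intervalIntegrable _ _)
    ((Phi_cont n k ε hε hε1 hk).stronglyMeasurable.stronglyMeasurableAtFilter)
    (Phi_cont n k ε hε hε1 hk).continuousAt

lemma psi_eq_ur (hε : 0 < ε) (hε1 : ε < 1) (hk : 0 < k) {H : ℝ}
    (hH : H ∈ Set.Icc ε (1 / ε)) : psi n k ε H = ur n k ε H := by
  unfold psi
  rw [ur_eq n k ε hε hε1 hk hH]
  congr 1
  refine intervalIntegral.integral_congr ?_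
  rw [Set.uIcc_of_le hH.1]
  exact fun t ht => Phi_eqOn n k ε hε hε1 hk ⟨ht.1, le_trans ht.2 hH.2⟩

lemma psi_eq_vr (hε : 0 < ε) (hε1 : ε < 1) (hk : 0 < k) {H : ℝ}
    (hH : H ∈ Set.Icc ε (1 / ε)) : psi n k ε H = vr n k ε H := by
  rw [psi_eq_ur n k ε hε hε1 hk hH]
  exact ur_eq_vr n k ε hε hε1 hk hH

lemma derivWithin_psi (hε : 0 < ε) (hε1 : ε < 1) (hk : 0 < k) {H : ℝ}
    (hH : H ∈ Set.Icc ε (1 / ε)) :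
    derivWithin (psi n k ε) (Set.Icc ε (1 / ε)) H = Phi n k ε H := by
  have hlt : ε < 1 / ε := lt_of_lt_of_le hε1 (by
    have h1 : (1:ℝ) < 1 / ε := (lt_div_iff₀ hε).mpr (by nlinarith)
    linarith)
  exact ((psi_hasDeriv n k ε hε hε1 hk H).hasDerivWithinAt).derivWithin
    (uniqueDiffOn_Icc hlt H hH)

lemma derivWithin2_psi (hε : 0 < ε) (hε1 : ε < 1) (hk : 0 < k) {H : ℝ}
    (hH : H ∈ Set.Icc ε (1 / ε)) :
    derivWithin (derivWithin (psi n k ε) (Set.Icc ε (1 / ε))) (Set.Icc ε (1 / ε)) H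
      = -(qq n k ε H) := by
  have hlt : ε < 1 / ε := lt_of_lt_of_le hε1 (by
    have h1 : (1:ℝ) < 1 / ε := (lt_div_iff₀ hε).mpr (by nlinarith)
    linarith)
  rw [derivWithin_congr (fun x hx => derivWithin_psi n k ε hε hε1 hk hx)
    (derivWithin_psi n k ε hε hε1 hk hH)]
  exact ((Phi_hasDeriv n k ε hε hε1 hk H).hasDerivWithinAt).derivWithin
    (uniqueDiffOn_Icc hlt H hH)

end TWaux

end TWaux

open TWaux in
/-- Existence for the approximating two-point boundary-value problem on the truncated
interval `[ε, 1/ε]`: there is a twice continuously differentiable `ψ` on `[ε, 1/ε]`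
satisfying the traveling-wave ODE `ψ'' + (2/3)(H² + H^{n−1})⁻¹ψ^{−1/2} = 0` there,
with `ψ(ε) = k²`, `ψ'(1/ε) = 0`, and moreover `ψ ≥ k²` and `ψ' ≥ 0` on `[ε, 1/ε]`. -/
theorem approximating_problem_existence (n k ε : ℝ) (hn : n ∈ Set.Ioo (0 : ℝ) 3)
    (hk : 0 < k) (hε : ε ∈ Set.Ioo (0 : ℝ) 1) :
    ∃ ψ : ℝ → ℝ,
      ContDiffOn ℝ 2 ψ (Set.Icc ε (1 / ε)) ∧
      (∀ H ∈ Set.Icc ε (1 / ε),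
        derivWithin (derivWithin ψ (Set.Icc ε (1 / ε))) (Set.Icc ε (1 / ε)) H
          + 2 / 3 * (H ^ 2 + H ^ (n - 1))⁻¹ * ψ H ^ (-(1 / 2) : ℝ) = 0) ∧
      ψ ε = k ^ 2 ∧
      derivWithin ψ (Set.Icc ε (1 / ε)) (1 / ε) = 0 ∧
      (∀ H ∈ Set.Icc ε (1 / ε), k ^ 2 ≤ ψ H) ∧
      (∀ H ∈ Set.Icc ε (1 / ε), 0 ≤ derivWithin ψ (Set.Icc ε (1 / ε)) H) := by
  obtain ⟨hε0, hε1⟩ := hε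
  have hlt : ε < 1 / ε := lt_of_lt_of_le hε1 (by
    have h1 : (1:ℝ) < 1 / ε := (lt_div_iff₀ hε0).mpr (by nlinarith)
    linarith)
  have hIcc : ε ∈ Set.Icc ε (1 / ε) := ⟨le_rfl, hlt.le⟩
  have hLm : (1 / ε) ∈ Set.Icc ε (1 / ε) := ⟨hlt.le, le_rfl⟩
  refine ⟨psi n k ε, ?_, ?_, ?_, ?_, ?_, ?_⟩
  · -- ContDiffOn
    have hud := uniqueDiffOn_Icc hlt
    rw [show (2 : WithTop ℕ∞) = 1 + 1 by norm_num, contDiffOn_succ_iff_derivWithin hud]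
    refine ⟨fun H hH => (psi_hasDeriv n k ε hε0 hε1 hk H).differentiableAt.differentiableWithinAt,
      fun h => by simp at h, ?_⟩
    have hPhi : ContDiffOn ℝ 1 (Phi n k ε) (Set.Icc ε (1 / ε)) := by
      rw [show (1 : WithTop ℕ∞) = 0 + 1 by norm_num, contDiffOn_succ_iff_derivWithin hud]
      refine ⟨fun H hH => (Phi_hasDeriv n k ε hε0 hε1 hk H).differentiableAt.differentiableWithinAt,
        fun h => by simp at h, ?_⟩
      rw [contDiffOn_zero]
      have : ContinuousOn (fun H => -(qq n k ε H)) (Set.Icc ε (1 / ε)) :=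
        ((qq_cont n k ε hε0 hε1 hk).neg).continuousOn
      refine this.congr ?_
      intro H hH
      exact ((Phi_hasDeriv n k ε hε0 hε1 hk H).hasDerivWithinAt).derivWithin (hud H hH)
    refine hPhi.congr ?_
    intro H hH
    exact derivWithin_psi n k ε hε0 hε1 hk hH
  · -- ODE
    intro H hH
    rw [derivWithin2_psi n k ε hε0 hε1 hk hH]
    have h1 : qq n k ε H = cc n H * gr (vr n k ε H) := qq_eqOn n k ε hH
    have h2 : vr n k ε H = psi n k ε H := (psi_eq_vr n k ε hε0 hε1 hk hH).symm
    rw [h1, h2]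
    unfold cc gr
    ring
  · -- ψ ε = k²
    unfold psi
    rw [intervalIntegral.integral_same]
    ring
  · -- ψ'(1/ε) = 0
    rw [derivWithin_psi n k ε hε0 hε1 hk hLm]
    unfold Phi
    exact intervalIntegral.integral_same
  · -- ψ ≥ k²
    intro H hH
    have h1 : 0 ≤ ∫ t in ε..H, Phi n k ε t := by
      refine intervalIntegral.integral_nonneg hH.1 ?_
      intro t ht
      exact Phi_nonneg n k ε hε0 hε1 hk ⟨ht.1, le_trans ht.2 hH.2⟩
    unfold psi
    linarith
  · -- ψ' ≥ 0
    intro H hH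
    rw [derivWithin_psi n k ε hε0 hε1 hk hH]
    exact Phi_nonneg n k ε hε0 hε1 hk hH
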